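/- arXiv:2006.12650 — 4 statements merged into one kernel-verified Lean document; each statement's English description precedes it below -/
import Mathlib

section
/- If X and Y are Poisson random variables with parameters λ and λ' respectively, then d_TV(X,Y) ≤ |λ − λ'|. -/
open MeasureTheory


noncomputable def pois (l : ℝ) (n : ℕ) : ℝ := Real.exp (-l) * l ^ n / n.factorial

lemma pois_nonneg {l : ℝ} (hl : 0 ≤ l) (n : ℕ) : 0 ≤ pois l n := by
  unfold pois; positivity

lemma summable_pois (l : ℝ) : Summable (pois l) := by
  unfold pois
  simp_rw [mul_div_assoc]
  exact (Real.summable_pow_div_factorial l).mul_left _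

lemma tsum_pois (l : ℝ) : ∑' n, pois l n = 1 := by
  unfold pois
  simp_rw [mul_div_assoc]
  rw [tsum_mul_left]
  have : ∑' n : ℕ, l ^ n / (n.factorial : ℝ) = Real.exp l := by
    rw [Real.exp_eq_exp_ℝ, NormedSpace.exp_eq_tsum_div]
  rw [this, ← Real.exp_add]
  simp

lemma key_pois {l l' : ℝ} (hl : 0 ≤ l) (hle : l ≤ l') (A : Set ℕ) :
    |(∑' n, A.indicator (pois l') n) - ∑' n, A.indicator (pois l) n| ≤ l' - l := by
  set δ := l' - l with hδdef
  have hδ : 0 ≤ δ := sub_nonneg.2 hle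
  have hl'0 : 0 ≤ l' := hl.trans hle
  set e := Real.exp (-δ) with he
  have he0 : 0 < e := Real.exp_pos _
  have he1 : e ≤ 1 := Real.exp_le_one_iff.2 (by linarith)
  have heδ : 1 - δ ≤ e := by
    have := Real.add_one_le_exp (-δ)
    linarith
  -- r n := pois l' n - e * pois l n is nonneg
  set r : ℕ → ℝ := fun n => pois l' n - e * pois l n with hr
  have hrnn : ∀ n, 0 ≤ r n := by
    intro n
    have hexp : e * Real.exp (-l) = Real.exp (-l') := by
      rw [he, ← Real.exp_add, hδdef]; ring_nf
    have hpow : l ^ n ≤ l' ^ n := pow_le_pow_left₀ hl hle n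
    simp only [hr, pois, sub_nonneg]
    calc e * (Real.exp (-l) * l ^ n / n.factorial)
        = (e * Real.exp (-l)) * l ^ n / n.factorial := by ring
      _ = Real.exp (-l') * l ^ n / n.factorial := by rw [hexp]
      _ ≤ Real.exp (-l') * l' ^ n / n.factorial := by
          gcongr
  have hsum_r : Summable r := (summable_pois l').sub ((summable_pois l).mul_left e)
  have htsum_r : ∑' n, r n = 1 - e := by
    rw [hr]
    rw [Summable.tsum_sub (summable_pois l') ((summable_pois l).mul_left e), tsum_mul_left,
      tsum_pois, tsum_pois, mul_one]
  -- indicator sums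
  have hindsum : ∀ m : ℝ, Summable (A.indicator (pois m)) := fun m =>
    (summable_pois m).indicator A
  have hindsum_r : Summable (A.indicator r) := hsum_r.indicator A
  set S := ∑' n, A.indicator (pois l) n with hS
  set S' := ∑' n, A.indicator (pois l') n with hS'
  set T := ∑' n, A.indicator r n with hT
  have hS0 : 0 ≤ S := tsum_nonneg fun n => Set.indicator_nonneg (fun i _ => pois_nonneg hl i) n
  have hS1 : S ≤ 1 := by
    rw [← tsum_pois l]
    exact Summable.tsum_le_tsum (fun n => Set.indicator_le_self' (fun i _ => pois_nonneg hl i) n)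
      (hindsum l) (summable_pois l)
  have hT0 : 0 ≤ T := tsum_nonneg fun n => Set.indicator_nonneg (fun i _ => hrnn i) n
  have hT1 : T ≤ 1 - e := by
    rw [← htsum_r]
    exact Summable.tsum_le_tsum (fun n => Set.indicator_le_self' (fun i _ => hrnn i) n)
      hindsum_r hsum_r
  have hsplit : S' = e * S + T := by
    rw [hS', hS, hT, ← tsum_mul_left, ← Summable.tsum_add ((hindsum l).mul_left e) hindsum_r]
    congr 1; funext n
    by_cases hn : n ∈ A
    · simp only [Set.indicator_of_mem hn]; ring
    · simp [Set.indicator_of_notMem hn]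
  rw [abs_le]
  constructor <;> nlinarith

lemma meas_pois_eq {Ω : Type*} [MeasurableSpace Ω] (μ : Measure Ω)
    [IsProbabilityMeasure μ] (X : Ω → ℕ) {l : ℝ} (hl : 0 ≤ l)
    (hX : ∀ n : ℕ, μ {ω | X ω = n} = ENNReal.ofReal (pois l n)) (A : Set ℕ) :
    μ (X ⁻¹' A) = ENNReal.ofReal (∑' n, A.indicator (pois l) n) := by
  set q : ℕ → ENNReal := fun n => ENNReal.ofReal (pois l n) with hq
  have hofind : ∀ B : Set ℕ, ENNReal.ofReal (∑' n, B.indicator (pois l) n)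
      = ∑' n, B.indicator q n := by
    intro B
    rw [ENNReal.ofReal_tsum_of_nonneg
      (fun n => Set.indicator_nonneg (fun i _ => pois_nonneg hl i) n)
      ((summable_pois l).indicator B)]
    congr 1; funext n
    by_cases hn : n ∈ B <;>
      simp [Set.indicator_of_mem, Set.indicator_of_notMem, hn, hq]
  have hupper : ∀ B : Set ℕ, μ (X ⁻¹' B) ≤ ∑' n, B.indicator q n := by
    intro B
    have hBU : X ⁻¹' B = ⋃ n ∈ B, {ω | X ω = n} := by
      ext ω; simp [Set.mem_preimage]
    rw [hBU]
    calc μ (⋃ n ∈ B, {ω | X ω = n}) ≤ ∑' n : B, μ {ω | X ω = (n : ℕ)} :=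
          measure_biUnion_le μ (Set.to_countable B) _
      _ = ∑' n : B, q (n : ℕ) := by simp_rw [hX, hq]
      _ = ∑' n, B.indicator q n := tsum_subtype B q
  have htotal : ∑' n, A.indicator q n + ∑' n, Aᶜ.indicator q n = 1 := by
    rw [← ENNReal.tsum_add]
    have : ∀ n, A.indicator q n + Aᶜ.indicator q n = q n := fun n =>
      congrFun (Set.indicator_self_add_compl A q) n
    simp_rw [this, hq]
    rw [← ENNReal.ofReal_tsum_of_nonneg (fun n => pois_nonneg hl n) (summable_pois l),
      tsum_pois]
    simp
  have hfin : ∑' n, Aᶜ.indicator q n ≠ ⊤ := by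
    intro h
    rw [h] at htotal
    simp at htotal
  have hlower : ∑' n, A.indicator q n ≤ μ (X ⁻¹' A) := by
    have h1 : (1 : ENNReal) ≤ μ (X ⁻¹' A) + ∑' n, Aᶜ.indicator q n := by
      calc (1 : ENNReal) = μ Set.univ := (measure_univ).symm
        _ = μ (X ⁻¹' A ∪ X ⁻¹' Aᶜ) := by
            rw [← Set.preimage_union, Set.union_compl_self, Set.preimage_univ]
        _ ≤ μ (X ⁻¹' A) + μ (X ⁻¹' Aᶜ) := measure_union_le _ _
        _ ≤ μ (X ⁻¹' A) + ∑' n, Aᶜ.indicator q n := by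
            exact add_le_add_right (hupper Aᶜ) _
    rw [← htotal] at h1
    exact ENNReal.le_of_add_le_add_right hfin h1
  rw [hofind A]
  exact le_antisymm (hupper A) hlower

/-- If `X ~ Poisson(λ)` and `Y ~ Poisson(λ')`, then `d_TV(X,Y) ≤ |λ − λ'|`. -/
theorem dTV_poisson_le {Ω : Type*} [MeasurableSpace Ω] (μ : Measure Ω)
    [IsProbabilityMeasure μ] (X Y : Ω → ℕ) (l l' : ℝ) (hl : 0 ≤ l) (hl' : 0 ≤ l')
    (hX : ∀ n : ℕ, μ {ω | X ω = n} = ENNReal.ofReal (Real.exp (-l) * l ^ n / n.factorial))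
    (hY : ∀ n : ℕ, μ {ω | Y ω = n} = ENNReal.ofReal (Real.exp (-l') * l' ^ n / n.factorial)) :
    (⨆ A : Set ℕ, |(μ (X ⁻¹' A)).toReal - (μ (Y ⁻¹' A)).toReal|) ≤ |l - l'| := by
  have hX' : ∀ n : ℕ, μ {ω | X ω = n} = ENNReal.ofReal (pois l n) := hX
  have hY' : ∀ n : ℕ, μ {ω | Y ω = n} = ENNReal.ofReal (pois l' n) := hY
  apply ciSup_le
  intro A
  rw [meas_pois_eq μ X hl hX' A, meas_pois_eq μ Y hl' hY' A,
    ENNReal.toReal_ofReal (tsum_nonneg fun n =>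
      Set.indicator_nonneg (fun i _ => pois_nonneg hl i) n),
    ENNReal.toReal_ofReal (tsum_nonneg fun n =>
      Set.indicator_nonneg (fun i _ => pois_nonneg hl' i) n)]
  rcases le_total l l' with h | h
  · rw [abs_sub_comm l l', abs_of_nonneg (sub_nonneg.2 h), abs_sub_comm]
    exact key_pois hl h A
  · rw [abs_of_nonneg (sub_nonneg.2 h)]
    exact key_pois hl' h A
end

section
/- Let T be a finite set of primes and let m ≥ 0 be an integer. Then the sum of 1/h over all positive integers h whose prime factors all lie in T and which have exactly m distinct prime factors is at most H'(T)^m / m!, where H'(T) = Σ_{p∈T} 1/(p−1). -/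
open scoped ENNReal

namespace SumRecipSmoothAux

def S (T : Finset ℕ) (m : ℕ) : Set ℕ :=
  {h : ℕ | 1 ≤ h ∧ (∀ p : ℕ, p.Prime → p ∣ h → p ∈ T) ∧ h.primeFactors.card = m}

noncomputable def G (T : Finset ℕ) (m : ℕ) : ℝ≥0∞ :=
  ∑' h : ℕ, Set.indicator (S T m) (fun h => ((h : ℝ≥0∞))⁻¹) h

lemma G_zero_le (T : Finset ℕ) : G T 0 ≤ 1 := by
  have hsub : S T 0 ⊆ {1} := by
    rintro h ⟨h1, -, hcard⟩
    have he : h.primeFactors = ∅ := Finset.card_eq_zero.mp hcard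
    rcases Nat.primeFactors_eq_empty.mp he with rfl | rfl
    · exact absurd h1 (by norm_num)
    · rfl
  have hle : G T 0 ≤ ∑' h : ℕ, Set.indicator ({1} : Set ℕ) (fun h => ((h : ℝ≥0∞))⁻¹) h := by
    refine Summable.tsum_le_tsum (fun h => ?_) ENNReal.summable ENNReal.summable
    exact Set.indicator_le_indicator_of_subset hsub (fun _ => zero_le) h
  refine hle.trans_eq ?_
  rw [tsum_eq_single 1 (by intro b hb; simp [Set.indicator_of_notMem, hb])]
  simp

lemma enn_inv_sub_one (q : ℕ) (hq : 2 ≤ q) :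
    ((q : ℝ≥0∞) - 1)⁻¹ = ENNReal.ofReal (1 / ((q : ℝ) - 1)) := by
  have h1 : ((q : ℝ≥0∞) - 1) = ENNReal.ofReal ((q : ℝ) - 1) := by
    rw [ENNReal.ofReal_sub _ (by norm_num : (0:ℝ) ≤ 1)]
    simp
  have h2 : (0:ℝ) < (q:ℝ) - 1 := by
    have : (2:ℝ) ≤ q := by exact_mod_cast hq
    linarith
  rw [h1, one_div, ← ENNReal.ofReal_inv_of_pos h2]

lemma tsum_geom (q : ℕ) (hq : 2 ≤ q) :
    ∑' a : ℕ, ((q : ℝ≥0∞))⁻¹ ^ (a + 1) = ((q : ℝ≥0∞) - 1)⁻¹ := by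
  have hq0 : (0:ℝ) < (q:ℝ) - 1 := by
    have : (2:ℝ) ≤ q := by exact_mod_cast hq
    linarith
  have hr0 : (0:ℝ) ≤ ((q:ℝ))⁻¹ := by positivity
  have hr1 : ((q:ℝ))⁻¹ < 1 := by
    rw [inv_lt_one_iff₀]; right; exact_mod_cast lt_of_lt_of_le one_lt_two hq
  have hqpos : (0:ℝ) < (q:ℝ) := by linarith
  have hterm : ∀ a : ℕ, ((q : ℝ≥0∞))⁻¹ ^ (a + 1) = ENNReal.ofReal (((q:ℝ))⁻¹ ^ (a + 1)) := by
    intro a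
    rw [ENNReal.ofReal_pow hr0, ENNReal.ofReal_inv_of_pos hqpos, ENNReal.ofReal_natCast]
  have hsum : Summable (fun a : ℕ => ((q:ℝ))⁻¹ ^ (a + 1)) := by
    apply Summable.comp_injective (summable_geometric_of_lt_one hr0 hr1) (add_left_injective 1)
  calc ∑' a : ℕ, ((q : ℝ≥0∞))⁻¹ ^ (a + 1)
      = ∑' a : ℕ, ENNReal.ofReal (((q:ℝ))⁻¹ ^ (a + 1)) := by simp_rw [hterm]
    _ = ENNReal.ofReal (∑' a : ℕ, ((q:ℝ))⁻¹ ^ (a + 1)) :=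
        (ENNReal.ofReal_tsum_of_nonneg (fun a => by positivity) hsum).symm
    _ = ((q : ℝ≥0∞) - 1)⁻¹ := by
        rw [enn_inv_sub_one q hq]
        congr 1
        have hgeo : ∑' a : ℕ, ((q:ℝ))⁻¹ ^ (a + 1) = ((q:ℝ))⁻¹ * (1 - ((q:ℝ))⁻¹)⁻¹ := by
          simp_rw [pow_succ']
          rw [tsum_mul_left, tsum_geometric_of_lt_one hr0 hr1]
        rw [hgeo]
        field_simp

noncomputable def gAux (T : Finset ℕ) (q m : ℕ) : ℕ × ℕ → ℝ≥0∞ := fun x =>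
  if x.1 = 0 then Set.indicator (S T (m+1)) (fun h => ((h:ℝ≥0∞))⁻¹) x.2
  else ((q : ℝ≥0∞))⁻¹ ^ x.1 * Set.indicator (S T m) (fun h => ((h:ℝ≥0∞))⁻¹) x.2

lemma gAux_zero (T : Finset ℕ) (q m k : ℕ) :
    gAux T q m (0, k) = Set.indicator (S T (m+1)) (fun h => ((h:ℝ≥0∞))⁻¹) k := by
  simp [gAux]

lemma gAux_succ (T : Finset ℕ) (q m a k : ℕ) :
    gAux T q m (a + 1, k) =
      ((q : ℝ≥0∞))⁻¹ ^ (a + 1) * Set.indicator (S T m) (fun h => ((h:ℝ≥0∞))⁻¹) k := by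
  simp [gAux]

lemma G_insert_le (T : Finset ℕ) (q : ℕ) (hq : q.Prime) (m : ℕ) :
    G (insert q T) (m + 1) ≤ G T (m + 1) +
      (∑' a : ℕ, ((q : ℝ≥0∞))⁻¹ ^ (a + 1)) * G T m := by
  classical
  set i : ℕ → ℕ × ℕ := fun h => (h.factorization q, h / q ^ h.factorization q) with hi
  have hk0 : ∀ h : ℕ, h ≠ 0 → h / q ^ h.factorization q ≠ 0 := by
    intro h h0
    exact (Nat.ordCompl_pos q h0).ne'
  have hinj : Function.Injective i := by
    intro h₁ h₂ heq
    have e1 : (i h₁).1 = (i h₂).1 := by rw [heq]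
    have e2 : (i h₁).2 = (i h₂).2 := by rw [heq]
    simp only [hi] at e1 e2
    by_cases h10 : h₁ = 0
    · subst h10
      by_contra h20
      have : h₂ / q ^ h₂.factorization q ≠ 0 := hk0 h₂ (fun hc => h20 hc.symm)
      simp at e2
      exact this e2.symm
    · by_cases h20 : h₂ = 0
      · subst h20
        simp at e2
        exact absurd e2 (by simpa using hk0 h₁ h10)
      · have f1 := Nat.ordProj_mul_ordCompl_eq_self h₁ q
        have f2 := Nat.ordProj_mul_ordCompl_eq_self h₂ q
        rw [e1] at e2
        rw [← f1, ← f2, e1, e2]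
  have hle : ∀ h : ℕ,
      Set.indicator (S (insert q T) (m+1)) (fun h => ((h:ℝ≥0∞))⁻¹) h ≤ gAux T q m (i h) := by
    intro h
    by_cases hmem : h ∈ S (insert q T) (m+1)
    · rw [Set.indicator_of_mem hmem]
      obtain ⟨h1, hsm, hcard⟩ := hmem
      have h0 : h ≠ 0 := by omega
      by_cases ha : h.factorization q = 0
      · have hqh : ¬ q ∣ h := by
          rcases (Nat.factorization_eq_zero_iff h q).mp ha with h' | h' | h'
          · exact absurd hq h'
          · exact h'
          · exact absurd h' h0
        have hmem' : h ∈ S T (m+1) := by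
          refine ⟨h1, fun p hp hpd => ?_, hcard⟩
          rcases Finset.mem_insert.mp (hsm p hp hpd) with rfl | hT
          · exact absurd hpd hqh
          · exact hT
        have hieq : i h = (0, h) := by
          simp only [hi, ha, pow_zero, Nat.div_one]
        rw [hieq, gAux_zero, Set.indicator_of_mem hmem']
      · have hqk : ¬ q ∣ (h / q ^ h.factorization q) := Nat.not_dvd_ordCompl hq h0
        have hk : (h / q ^ h.factorization q) ≠ 0 := hk0 h h0
        have hfac : q ^ h.factorization q * (h / q ^ h.factorization q) = h :=
          Nat.ordProj_mul_ordCompl_eq_self h q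
        have hpf : h.primeFactors =
            insert q (h / q ^ h.factorization q).primeFactors := by
          conv_lhs => rw [← hfac]
          rw [Nat.primeFactors_mul (pow_ne_zero _ hq.pos.ne') hk,
            Nat.primeFactors_pow _ ha, Nat.Prime.primeFactors hq]
          rfl
        have hqnk : q ∉ (h / q ^ h.factorization q).primeFactors := fun hc =>
          hqk (Nat.dvd_of_mem_primeFactors hc)
        have hcardk : (h / q ^ h.factorization q).primeFactors.card = m := by
          have hc2 := hcard
          rw [hpf, Finset.card_insert_of_notMem hqnk] at hc2
          omega
        have hkmem : (h / q ^ h.factorization q) ∈ S T m := by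
          refine ⟨Nat.one_le_iff_ne_zero.mpr hk, fun p hp hpd => ?_, hcardk⟩
          have hph : p ∣ h := hpd.trans (Nat.ordCompl_dvd h q)
          rcases Finset.mem_insert.mp (hsm p hp hph) with rfl | hT
          · exact absurd hpd hqk
          · exact hT
        obtain ⟨a, haa⟩ : ∃ a, h.factorization q = a + 1 :=
          ⟨h.factorization q - 1, by omega⟩
        have hieq : i h = (a + 1, h / q ^ h.factorization q) := by
          simp only [hi, haa]
        rw [hieq, gAux_succ, Set.indicator_of_mem hkmem, ← haa]
        have heq : ((h : ℝ≥0∞))⁻¹ =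
            ((q:ℝ≥0∞))⁻¹ ^ (h.factorization q) * (((h / q ^ h.factorization q : ℕ) : ℝ≥0∞))⁻¹ := by
          conv_lhs => rw [← hfac]
          push_cast
          rw [ENNReal.mul_inv (Or.inl (pow_ne_zero _ (by exact_mod_cast hq.pos.ne')))
            (Or.inl (ENNReal.pow_ne_top (ENNReal.natCast_ne_top q))),
            ENNReal.inv_pow]
        exact le_of_eq heq
    · rw [Set.indicator_of_notMem hmem]
      exact zero_le
  calc G (insert q T) (m+1)
      ≤ ∑' h : ℕ, gAux T q m (i h) := Summable.tsum_le_tsum hle ENNReal.summable ENNReal.summable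
    _ ≤ ∑' y : ℕ × ℕ, gAux T q m y := ENNReal.tsum_comp_le_tsum_of_injective hinj _
    _ = ∑' (a : ℕ) (k : ℕ), gAux T q m (a, k) := ENNReal.tsum_prod'
    _ = G T (m+1) + (∑' a : ℕ, ((q : ℝ≥0∞))⁻¹ ^ (a + 1)) * G T m := by
        rw [tsum_eq_zero_add' ENNReal.summable]
        have hA : (∑' k : ℕ, gAux T q m (0, k)) = G T (m+1) := by
          simp_rw [gAux_zero]; rfl
        have hB : (∑' (b : ℕ) (k : ℕ), gAux T q m (b + 1, k)) =
            (∑' a : ℕ, ((q : ℝ≥0∞))⁻¹ ^ (a + 1)) * G T m := by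
          simp_rw [gAux_succ, ENNReal.tsum_mul_left]
          rw [ENNReal.tsum_mul_right]; rfl
        rw [hA, hB]

lemma binom_aux (a x : ℝ≥0∞) (m : ℕ) :
    a ^ (m+1) / (m+1).factorial + x * (a ^ m / m.factorial) ≤
      (a + x) ^ (m+1) / (m+1).factorial := by
  have h1 : a ^ (m+1) + (m+1 : ℕ) * (x * a ^ m) ≤ (a + x) ^ (m+1) := by
    rw [add_pow]
    have hsub : ({m, m+1} : Finset ℕ) ⊆ Finset.range (m+2) := by
      simp only [Finset.insert_subset_iff, Finset.singleton_subset_iff, Finset.mem_range]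
      omega
    have hmm : m ∉ ({m+1} : Finset ℕ) := by simp
    calc a ^ (m+1) + (m+1 : ℕ) * (x * a ^ m)
        = ∑ k ∈ ({m, m+1} : Finset ℕ), a ^ k * x ^ (m+1-k) * ((m+1).choose k) := by
          rw [Finset.sum_insert hmm, Finset.sum_singleton]
          have e1 : m + 1 - m = 1 := by omega
          rw [e1, Nat.choose_succ_self_right, Nat.sub_self, Nat.choose_self]
          push_cast
          ring
      _ ≤ ∑ k ∈ Finset.range (m+2), a ^ k * x ^ (m+1-k) * ((m+1).choose k) :=
          Finset.sum_le_sum_of_subset hsub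
  have hfac : ((m+1).factorial : ℝ≥0∞) = (m+1 : ℕ) * (m.factorial : ℕ) := by
    rw [Nat.factorial_succ]; push_cast; ring
  calc a ^ (m+1) / (m+1).factorial + x * (a ^ m / m.factorial)
      = a ^ (m+1) / (m+1).factorial + ((m+1:ℕ) * (x * a ^ m)) / ((m+1:ℕ) * (m.factorial : ℕ)) := by
        rw [ENNReal.mul_div_mul_left _ _ (by exact_mod_cast Nat.succ_ne_zero m)
          (ENNReal.natCast_ne_top _)]
        rw [mul_div_assoc]
    _ = a ^ (m+1) / (m+1).factorial + ((m+1:ℕ) * (x * a ^ m)) / ((m+1).factorial : ℕ) := by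
        rw [hfac]
    _ = (a ^ (m+1) + (m+1:ℕ) * (x * a ^ m)) / ((m+1).factorial : ℕ) := by
        rw [ENNReal.div_add_div_same]
    _ ≤ (a + x) ^ (m+1) / ((m+1).factorial : ℕ) := ENNReal.div_le_div_right h1 _

lemma G_le (T : Finset ℕ) (m : ℕ) (hT : ∀ p ∈ T, p.Prime) :
    G T m ≤ (∑ p ∈ T, ((p : ℝ≥0∞) - 1)⁻¹) ^ m / m.factorial := by
  classical
  induction T using Finset.induction_on generalizing m with
  | empty =>
    cases m with
    | zero => simpa using G_zero_le ∅
    | succ m =>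
      have hS : S ∅ (m+1) = ∅ := by
        ext h
        simp only [S, Set.mem_setOf_eq, Set.mem_empty_iff_false, iff_false, not_and]
        intro h1 hsm
        intro hcard
        obtain ⟨p, hp⟩ := Finset.card_pos.mp (by omega : 0 < h.primeFactors.card)
        exact absurd (hsm p (Nat.prime_of_mem_primeFactors hp)
          (Nat.dvd_of_mem_primeFactors hp)) (Finset.notMem_empty p)
      have hG : G ∅ (m+1) = 0 := by
        rw [G, hS]
        simp
      rw [hG]
      exact zero_le
  | @insert q T' hqT' ih =>
    have hq : q.Prime := hT q (Finset.mem_insert_self q T')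
    have hT' : ∀ p ∈ T', p.Prime := fun p hp => hT p (Finset.mem_insert_of_mem hp)
    cases m with
    | zero => simpa using G_zero_le (insert q T')
    | succ m =>
      calc G (insert q T') (m+1)
          ≤ G T' (m+1) + (∑' a : ℕ, ((q : ℝ≥0∞))⁻¹ ^ (a + 1)) * G T' m :=
            G_insert_le T' q hq m
        _ = G T' (m+1) + ((q:ℝ≥0∞) - 1)⁻¹ * G T' m := by rw [tsum_geom q hq.two_le]
        _ ≤ (∑ p ∈ T', ((p : ℝ≥0∞) - 1)⁻¹) ^ (m+1) / (m+1).factorial +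
            ((q:ℝ≥0∞) - 1)⁻¹ * ((∑ p ∈ T', ((p : ℝ≥0∞) - 1)⁻¹) ^ m / m.factorial) :=
            add_le_add (ih (m+1) hT') (mul_le_mul_right (ih m hT') _)
        _ ≤ ((∑ p ∈ T', ((p : ℝ≥0∞) - 1)⁻¹) + ((q:ℝ≥0∞) - 1)⁻¹) ^ (m+1) / (m+1).factorial :=
            binom_aux _ _ m
        _ = (∑ p ∈ insert q T', ((p : ℝ≥0∞) - 1)⁻¹) ^ (m+1) / (m+1).factorial := by
            rw [Finset.sum_insert hqT', add_comm]

end SumRecipSmoothAux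

open SumRecipSmoothAux in
/-- The sum of `1/h` over positive integers `h` whose prime factors all lie in `T` and
with exactly `m` distinct prime factors is at most `H'(T)^m / m!`. -/
theorem sum_recip_smooth_with_m_factors (T : Finset ℕ) (hT : ∀ p ∈ T, p.Prime) (m : ℕ) :
    (∑' h : ℕ,
        Set.indicator {h : ℕ | 1 ≤ h ∧ (∀ p : ℕ, p.Prime → p ∣ h → p ∈ T) ∧
          h.primeFactors.card = m} (fun h => (1 : ℝ) / h) h)
      ≤ (∑ p ∈ T, (1 : ℝ) / (p - 1)) ^ m / m.factorial := by
  classical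
  have hpt : ∀ p ∈ T, (0:ℝ) < (p:ℝ) - 1 := by
    intro p hp
    have : (2:ℝ) ≤ p := by exact_mod_cast (hT p hp).two_le
    linarith
  have hterm : ∀ p ∈ T, (0:ℝ) ≤ 1 / ((p:ℝ) - 1) := fun p hp => by
    have := hpt p hp; positivity
  have hsumnn : (0:ℝ) ≤ ∑ p ∈ T, (1:ℝ) / ((p:ℝ) - 1) := Finset.sum_nonneg hterm
  have hRHS0 : (0:ℝ) ≤ (∑ p ∈ T, (1:ℝ) / ((p:ℝ) - 1)) ^ m / m.factorial := by positivity
  set f : ℕ → ℝ := fun h => Set.indicator (S T m) (fun h => (1:ℝ)/h) h with hf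
  show (∑' h : ℕ, f h) ≤ _
  have hnonneg : ∀ h : ℕ, 0 ≤ f h := by
    intro h
    exact Set.indicator_nonneg (fun x _ => by positivity) h
  by_cases hs : Summable f
  · have key := G_le T m hT
    have hofReal : ENNReal.ofReal (∑' h : ℕ, f h) = G T m := by
      rw [ENNReal.ofReal_tsum_of_nonneg hnonneg hs]
      rw [G]
      congr 1
      funext h
      by_cases hmem : h ∈ S T m
      · rw [hf]
        simp only
        rw [Set.indicator_of_mem hmem, Set.indicator_of_mem hmem]
        have h0 : (0:ℝ) < (h:ℝ) := by exact_mod_cast hmem.1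
        rw [one_div, ENNReal.ofReal_inv_of_pos h0, ENNReal.ofReal_natCast]
      · rw [hf]
        simp only
        rw [Set.indicator_of_notMem hmem, Set.indicator_of_notMem hmem, ENNReal.ofReal_zero]
    have hsumE : ENNReal.ofReal (∑ p ∈ T, (1:ℝ)/((p:ℝ) - 1)) =
        ∑ p ∈ T, ((p:ℝ≥0∞) - 1)⁻¹ := by
      rw [ENNReal.ofReal_sum_of_nonneg hterm]
      exact Finset.sum_congr rfl fun p hp => (enn_inv_sub_one p (hT p hp).two_le).symm
    have hRHSeq : ENNReal.ofReal ((∑ p ∈ T, (1:ℝ) / ((p:ℝ) - 1)) ^ m / m.factorial) =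
        (∑ p ∈ T, ((p : ℝ≥0∞) - 1)⁻¹) ^ m / m.factorial := by
      rw [ENNReal.ofReal_div_of_pos (by exact_mod_cast m.factorial_pos),
        ENNReal.ofReal_pow hsumnn, hsumE, ENNReal.ofReal_natCast]
    have : ENNReal.ofReal (∑' h : ℕ, f h) ≤
        ENNReal.ofReal ((∑ p ∈ T, (1:ℝ) / ((p:ℝ) - 1)) ^ m / m.factorial) := by
      rw [hofReal, hRHSeq]
      exact key
    exact (ENNReal.ofReal_le_ofReal_iff hRHS0).mp this
  · rw [tsum_eq_zero_of_not_summable hs]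
    exact hRHS0
end

section
/- Let T be a finite set of primes, and for each p ∈ T let X_p be independent with P(X_p = k) = p^{-k}(1 − 1/p). Let U_T = #{p ∈ T : X_p ≥ 1}. Then for complex z with |z| ≤ 2, E[z^{U_T}] = Π_{p∈T}(1 + (z−1)/p), and there is an absolute constant C such that |E[z^{U_T}] − e^{(z−1)H(T)}| ≤ C·|z−1|²·H''(T)·e^{(Re z − 1)H(T)} uniformly for |z| ≤ 2. -/
open MeasureTheory ProbabilityTheory Finset

-- L1
lemma norm_one_add_le_exp (u : ℂ) : ‖1 + u‖ ≤ Real.exp (u.re + ‖u‖^2/2) := by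
  have h1 : ‖1 + u‖^2 = 1 + 2*u.re + ‖u‖^2 := by
    rw [← Complex.normSq_eq_norm_sq, ← Complex.normSq_eq_norm_sq,
      Complex.normSq_apply, Complex.normSq_apply]
    simp [Complex.add_re, Complex.add_im]
    ring
  have h2 : (1:ℝ) + 2*u.re + ‖u‖^2 ≤ Real.exp (2*u.re + ‖u‖^2) := by
    have := Real.add_one_le_exp (2*u.re + ‖u‖^2)
    linarith
  have h3 : Real.exp (2*u.re + ‖u‖^2) = Real.exp (u.re + ‖u‖^2/2) ^ 2 := by
    rw [← Real.exp_nat_mul]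
    norm_num
    ring_nf
  nlinarith [norm_nonneg (1+u), Real.exp_pos (u.re + ‖u‖^2/2)]

-- L2
lemma norm_exp_sub_one_sub_le {u : ℂ} (h : ‖u‖ ≤ 3/2) :
    ‖Complex.exp u - 1 - u‖ ≤ 10 * ‖u‖^2 := by
  rcases le_or_gt ‖u‖ 1 with h1 | h1
  · have := Complex.norm_exp_sub_one_sub_id_le (x := u) (by exact h1)
    nlinarith [sq_nonneg ‖u‖]
  · have hb : ‖Complex.exp u - 1 - u‖ ≤ ‖Complex.exp u‖ + ‖(1:ℂ)‖ + ‖u‖ := by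
      calc ‖Complex.exp u - 1 - u‖ ≤ ‖Complex.exp u - 1‖ + ‖u‖ := norm_sub_le _ _
        _ ≤ ‖Complex.exp u‖ + ‖(1:ℂ)‖ + ‖u‖ := by linarith [norm_sub_le (Complex.exp u) 1]
    have he : ‖Complex.exp u‖ ≤ Real.exp (3/2) := by
      rw [Complex.norm_exp]
      exact Real.exp_le_exp.2 ((le_abs_self u.re).trans ((Complex.abs_re_le_norm u).trans (by exact h)))
    have he2 : Real.exp (3/2) ≤ Real.exp 2 := Real.exp_le_exp.2 (by norm_num)
    have he3 : Real.exp 2 ≤ 7.5 := by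
      have h9 := Real.exp_one_lt_d9
      have : Real.exp 2 = Real.exp 1 ^ 2 := by
        rw [← Real.exp_nat_mul]; norm_num
      nlinarith [Real.exp_pos 1]
    have : ‖Complex.exp u - 1 - u‖ ≤ 10 := by
      simp only [norm_one] at hb; linarith
    nlinarith [norm_nonneg u]

lemma prod_sub_prod_norm_le (s : Finset ℕ) (f g : ℕ → ℂ) (A : ℕ → ℝ)
    (hA : ∀ i ∈ s, 0 ≤ A i) (hf : ∀ i ∈ s, ‖f i‖ ≤ A i) (hg : ∀ i ∈ s, ‖g i‖ ≤ A i) :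
    ‖∏ i ∈ s, f i - ∏ i ∈ s, g i‖ ≤ ∑ i ∈ s, ‖f i - g i‖ * ∏ j ∈ s.erase i, A j := by
  induction s using Finset.induction_on with
  | empty => simp
  | @insert a s ha ih =>
    have hA' : ∀ i ∈ s, 0 ≤ A i := fun i hi => hA i (mem_insert_of_mem hi)
    have hf' : ∀ i ∈ s, ‖f i‖ ≤ A i := fun i hi => hf i (mem_insert_of_mem hi)
    have hg' : ∀ i ∈ s, ‖g i‖ ≤ A i := fun i hi => hg i (mem_insert_of_mem hi)
    have key : ∏ i ∈ insert a s, f i - ∏ i ∈ insert a s, g i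
        = (f a - g a) * ∏ i ∈ s, f i + g a * (∏ i ∈ s, f i - ∏ i ∈ s, g i) := by
      rw [prod_insert ha, prod_insert ha]; ring
    have hprodf : ‖∏ i ∈ s, f i‖ ≤ ∏ i ∈ s, A i := by
      rw [norm_prod]
      exact Finset.prod_le_prod (fun i hi => norm_nonneg _) hf'
    have hAnn : (0:ℝ) ≤ ∏ i ∈ s, A i := Finset.prod_nonneg hA'
    calc ‖∏ i ∈ insert a s, f i - ∏ i ∈ insert a s, g i‖
        ≤ ‖f a - g a‖ * ∏ i ∈ s, A i
          + A a * ∑ i ∈ s, ‖f i - g i‖ * ∏ j ∈ s.erase i, A j := by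
          rw [key]
          refine (norm_add_le _ _).trans (add_le_add ?_ ?_)
          · rw [norm_mul]
            exact mul_le_mul_of_nonneg_left hprodf (norm_nonneg _)
          · rw [norm_mul]
            exact mul_le_mul (hg a (mem_insert_self a s)) (ih hA' hf' hg')
              (norm_nonneg _) (hA a (mem_insert_self a s))
      _ = ∑ i ∈ insert a s, ‖f i - g i‖ * ∏ j ∈ (insert a s).erase i, A j := by
          rw [Finset.sum_insert ha, Finset.erase_insert ha, Finset.mul_sum]
          congr 1
          refine Finset.sum_congr rfl fun i hi => ?_
          have hia : i ≠ a := fun h => ha (h ▸ hi)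
          rw [Finset.erase_insert_of_ne hia.symm,
            Finset.prod_insert (fun h => ha (Finset.mem_of_mem_erase h))]
          ring

lemma sum_inv_sq_le_one (T : Finset ℕ) (hT : ∀ p ∈ T, 2 ≤ p) :
    ∑ p ∈ T, (1:ℝ)/(p:ℝ)^2 ≤ 1 := by
  set g : ℕ → ℝ := fun n => if 2 ≤ n then 1/((n:ℝ)-1) - 1/n else 0 with hg
  have hgnn : ∀ n, 0 ≤ g n := by
    intro n
    simp only [hg]
    split
    · rename_i h
      have h2 : (2:ℝ) ≤ n := by exact_mod_cast h
      have : (0:ℝ) < (n:ℝ) - 1 := by linarith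
      have : 1/(n:ℝ) ≤ 1/((n:ℝ)-1) := by
        apply one_div_le_one_div_of_le this; linarith
      linarith
    · exact le_refl 0
  have hle : ∀ p ∈ T, (1:ℝ)/(p:ℝ)^2 ≤ g p := by
    intro p hp
    have h2 : 2 ≤ p := hT p hp
    have h2' : (2:ℝ) ≤ p := by exact_mod_cast h2
    simp only [hg, if_pos h2]
    have hpos : (0:ℝ) < (p:ℝ) - 1 := by linarith
    have hppos : (0:ℝ) < (p:ℝ) := by linarith
    rw [div_sub_div _ _ (ne_of_gt hpos) (ne_of_gt hppos)]
    rw [div_le_div_iff₀ (by positivity) (by positivity)]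
    ring_nf
    nlinarith
  have htel : ∀ N : ℕ, ∑ n ∈ range N, g n + (if 2 ≤ N then 1/((N:ℝ)-1) else 1) = 1 := by
    intro N
    induction N with
    | zero => simp
    | succ N ih =>
      rw [Finset.sum_range_succ]
      rcases Nat.lt_or_ge N 2 with hN | hN
      · interval_cases N <;> simp_all [hg] <;> norm_num
      · have hN' : (2:ℝ) ≤ N := by exact_mod_cast hN
        have h1 : 2 ≤ N + 1 := by omega
        rw [if_pos hN] at ih
        rw [if_pos h1]
        have hGN : g N = 1/((N:ℝ)-1) - 1/N := by simp only [hg]; rw [if_pos hN]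
        rw [hGN]
        push_cast
        have hc : ((N:ℝ) + 1 - 1) = N := by ring
        rw [hc]
        linarith [ih]
  obtain ⟨N, hN⟩ := T.exists_nat_subset_range
  calc ∑ p ∈ T, (1:ℝ)/(p:ℝ)^2 ≤ ∑ p ∈ T, g p := Finset.sum_le_sum hle
    _ ≤ ∑ n ∈ range N, g n := Finset.sum_le_sum_of_subset_of_nonneg hN
        (fun i _ _ => hgnn i)
    _ ≤ 1 := by
        have := htel N
        split at this
        · rename_i h
          have h2 : (2:ℝ) ≤ N := by exact_mod_cast h
          have : ∑ n ∈ range N, g n = 1 - 1/((N:ℝ)-1) := by linarith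
          rw [this]
          have hpos : (0:ℝ) < (N:ℝ)-1 := by linarith
          have : 0 ≤ 1/((N:ℝ)-1) := by positivity
          linarith
        · linarith

lemma indepFun_integral_mul_complex {Ω : Type} [MeasurableSpace Ω] {μ : Measure Ω}
    {A B : Ω → ℂ} (h : IndepFun A B μ) (hA : Integrable A μ) (hB : Integrable B μ) :
    ∫ ω, A ω * B ω ∂μ = (∫ ω, A ω ∂μ) * (∫ ω, B ω ∂μ) := by
  have ha : Integrable (fun ω => (A ω).re) μ := by have := hA.re; simpa using this
  have hb : Integrable (fun ω => (A ω).im) μ := by have := hA.im; simpa using this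
  have hc : Integrable (fun ω => (B ω).re) μ := by have := hB.re; simpa using this
  have hd : Integrable (fun ω => (B ω).im) μ := by have := hB.im; simpa using this
  have i11 : IndepFun (fun ω => (A ω).re) (fun ω => (B ω).re) μ :=
    h.comp Complex.measurable_re Complex.measurable_re
  have i12 : IndepFun (fun ω => (A ω).re) (fun ω => (B ω).im) μ :=
    h.comp Complex.measurable_re Complex.measurable_im
  have i21 : IndepFun (fun ω => (A ω).im) (fun ω => (B ω).re) μ :=
    h.comp Complex.measurable_im Complex.measurable_re
  have i22 : IndepFun (fun ω => (A ω).im) (fun ω => (B ω).im) μ :=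
    h.comp Complex.measurable_im Complex.measurable_im
  have e11 : ∫ ω, (A ω).re * (B ω).re ∂μ
      = (∫ ω, (A ω).re ∂μ) * (∫ ω, (B ω).re ∂μ) := i11.integral_fun_mul_eq_mul_integral ha.1 hc.1
  have e12 : ∫ ω, (A ω).re * (B ω).im ∂μ
      = (∫ ω, (A ω).re ∂μ) * (∫ ω, (B ω).im ∂μ) := i12.integral_fun_mul_eq_mul_integral ha.1 hd.1
  have e21 : ∫ ω, (A ω).im * (B ω).re ∂μ
      = (∫ ω, (A ω).im ∂μ) * (∫ ω, (B ω).re ∂μ) := i21.integral_fun_mul_eq_mul_integral hb.1 hc.1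
  have e22 : ∫ ω, (A ω).im * (B ω).im ∂μ
      = (∫ ω, (A ω).im ∂μ) * (∫ ω, (B ω).im ∂μ) := i22.integral_fun_mul_eq_mul_integral hb.1 hd.1
  have m11 : Integrable (fun ω => (A ω).re * (B ω).re) μ := i11.integrable_mul ha hc
  have m12 : Integrable (fun ω => (A ω).re * (B ω).im) μ := i12.integrable_mul ha hd
  have m21 : Integrable (fun ω => (A ω).im * (B ω).re) μ := i21.integrable_mul hb hc
  have m22 : Integrable (fun ω => (A ω).im * (B ω).im) μ := i22.integrable_mul hb hd
  have hAB : Integrable (fun ω => A ω * B ω) μ := h.integrable_mul hA hB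
  have haR : ∫ ω, (A ω).re ∂μ = (∫ ω, A ω ∂μ).re := by simpa using integral_re (𝕜 := ℂ) hA
  have haI : ∫ ω, (A ω).im ∂μ = (∫ ω, A ω ∂μ).im := by simpa using integral_im (𝕜 := ℂ) hA
  have hbR : ∫ ω, (B ω).re ∂μ = (∫ ω, B ω ∂μ).re := by simpa using integral_re (𝕜 := ℂ) hB
  have hbI : ∫ ω, (B ω).im ∂μ = (∫ ω, B ω ∂μ).im := by simpa using integral_im (𝕜 := ℂ) hB
  apply Complex.ext
  · have h1 : ∫ ω, (A ω * B ω).re ∂μ = (∫ ω, A ω * B ω ∂μ).re := by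
      simpa using integral_re (𝕜 := ℂ) hAB
    rw [← h1]
    calc ∫ ω, (A ω * B ω).re ∂μ
        = ∫ ω, ((A ω).re * (B ω).re - (A ω).im * (B ω).im) ∂μ := by
          refine integral_congr_ae (Filter.Eventually.of_forall fun ω => ?_)
          exact Complex.mul_re _ _
      _ = (∫ ω, A ω ∂μ).re * (∫ ω, B ω ∂μ).re - (∫ ω, A ω ∂μ).im * (∫ ω, B ω ∂μ).im := by
          rw [integral_sub m11 m22, e11, e22, haR, haI, hbR, hbI]
      _ = ((∫ ω, A ω ∂μ) * (∫ ω, B ω ∂μ)).re := (Complex.mul_re _ _).symm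
  · have h1 : ∫ ω, (A ω * B ω).im ∂μ = (∫ ω, A ω * B ω ∂μ).im := by
      simpa using integral_im (𝕜 := ℂ) hAB
    rw [← h1]
    calc ∫ ω, (A ω * B ω).im ∂μ
        = ∫ ω, ((A ω).re * (B ω).im + (A ω).im * (B ω).re) ∂μ := by
          refine integral_congr_ae (Filter.Eventually.of_forall fun ω => ?_)
          exact Complex.mul_im _ _
      _ = (∫ ω, A ω ∂μ).re * (∫ ω, B ω ∂μ).im + (∫ ω, A ω ∂μ).im * (∫ ω, B ω ∂μ).re := by
          rw [integral_add m12 m21, e12, e21, haR, haI, hbR, hbI]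
      _ = ((∫ ω, A ω ∂μ) * (∫ ω, B ω ∂μ)).im := (Complex.mul_im _ _).symm

lemma integral_finset_prod_complex {Ω : Type} [MeasurableSpace Ω] (μ : Measure Ω)
    [IsProbabilityMeasure μ] (Y : ℕ → Ω → ℂ) (hmeas : ∀ p, Measurable (Y p))
    (hbdd : ∀ p ω, ‖Y p ω‖ ≤ 2)
    (hind : iIndepFun Y μ) (T : Finset ℕ) :
    ∫ ω, ∏ p ∈ T, Y p ω ∂μ = ∏ p ∈ T, ∫ ω, Y p ω ∂μ := by
  have hint : ∀ p, Integrable (Y p) μ := fun p =>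
    (integrable_const (2:ℝ)).mono' (hmeas p).aestronglyMeasurable
      (Filter.Eventually.of_forall (hbdd p))
  induction T using Finset.induction_on with
  | empty => simp
  | @insert a s ha ih =>
    have hintprod : Integrable (fun ω => ∏ p ∈ s, Y p ω) μ := by
      refine (integrable_const ((2:ℝ)^s.card)).mono'
        ((Finset.measurable_prod s (fun p _ => hmeas p)).aestronglyMeasurable)
        (Filter.Eventually.of_forall fun ω => ?_)
      rw [norm_prod]
      calc ∏ p ∈ s, ‖Y p ω‖ ≤ ∏ p ∈ s, (2:ℝ) :=
            Finset.prod_le_prod (fun p _ => norm_nonneg _) (fun p _ => hbdd p ω)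
        _ = (2:ℝ)^s.card := by rw [Finset.prod_const]
    have hindep : IndepFun (fun ω => ∏ p ∈ s, Y p ω) (Y a) μ := by
      have := hind.indepFun_finset_prod_of_notMem hmeas ha
      have heq : (∏ j ∈ s, Y j) = fun ω => ∏ p ∈ s, Y p ω := by
        funext ω; simp [Finset.prod_apply]
      rwa [heq] at this
    simp_rw [Finset.prod_insert ha]
    rw [← ih]
    have : ∫ ω, Y a ω * ∏ p ∈ s, Y p ω ∂μ
        = (∫ ω, Y a ω ∂μ) * ∫ ω, ∏ p ∈ s, Y p ω ∂μ :=
      indepFun_integral_mul_complex hindep.symm (hint a) hintprod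
    simpa using this

lemma integral_ite_eq_aux {Ω : Type} [MeasurableSpace Ω] (μ : Measure Ω)
    [IsProbabilityMeasure μ] (X : Ω → ℕ) (hX : Measurable X) (p : ℕ) (hp : 2 ≤ p)
    (h0 : μ {ω | X ω = 0} = ENNReal.ofReal (1 - 1/(p:ℝ))) (z : ℂ) :
    ∫ ω, (if 1 ≤ X ω then z else 1) ∂μ = 1 + (z - 1)/(p:ℂ) := by
  have hpR : (2:ℝ) ≤ (p:ℝ) := by exact_mod_cast hp
  have hpC : ((p:ℕ):ℂ) ≠ 0 := by
    exact_mod_cast Nat.cast_ne_zero.2 (by omega)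
  have hAmeas : MeasurableSet {ω | X ω = 0} := hX (measurableSet_singleton 0)
  have hfun : ∀ ω, (if 1 ≤ X ω then z else 1)
      = z + Set.indicator {ω | X ω = 0} (fun _ => 1 - z) ω := by
    intro ω
    by_cases h : X ω = 0
    · have h1 : ¬ (1 ≤ X ω) := by omega
      rw [if_neg h1, Set.indicator_of_mem (by exact h)]
      ring
    · have h1 : 1 ≤ X ω := by omega
      rw [if_pos h1, Set.indicator_of_notMem (by exact h)]
      ring
  rw [integral_congr_ae (Filter.Eventually.of_forall hfun),
    integral_add (integrable_const z) ((integrable_const (1 - z)).indicator hAmeas),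
    integral_const, integral_indicator_const _ hAmeas, measureReal_def, measureReal_def, h0,
    ENNReal.toReal_ofReal (sub_nonneg.2 (by rw [div_le_one (by linarith)]; linarith))]
  rw [measure_univ, ENNReal.toReal_one, one_smul]
  rw [Complex.real_smul]
  push_cast
  field_simp
  ring

open MeasureTheory ProbabilityTheory

/-- For `U_T = #{p ∈ T : X_p ≥ 1}` with the `X_p` independent geometric-type variables,
and `|z| ≤ 2`: `E[z^{U_T}] = ∏_{p∈T}(1 + (z−1)/p)`, and there is an absolute constant `C`
with `|E[z^{U_T}] − e^{(z−1)H(T)}| ≤ C |z−1|² H''(T) e^{(Re z − 1)H(T)}`. -/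
theorem U_generating_function :
    ∃ C : ℝ, 0 < C ∧
      ∀ (Ω : Type) (_ : MeasurableSpace Ω) (μ : Measure Ω), IsProbabilityMeasure μ →
      ∀ T : Finset ℕ, (∀ p ∈ T, p.Prime) →
      ∀ X : ℕ → Ω → ℕ, (∀ p, Measurable (X p)) →
      iIndepFun X μ →
      (∀ p ∈ T, ∀ k : ℕ,
        μ {ω | X p ω = k} = ENNReal.ofReal ((1 / (p : ℝ) ^ k) * (1 - 1 / p))) →
      ∀ z : ℂ, ‖z‖ ≤ 2 →
        (∫ ω, z ^ (T.filter (fun p => 1 ≤ X p ω)).card ∂μ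
            = ∏ p ∈ T, (1 + (z - 1) / (p : ℂ))) ∧
        ‖(∫ ω, z ^ (T.filter (fun p => 1 ≤ X p ω)).card ∂μ)
            - Complex.exp ((z - 1) * (∑ p ∈ T, (1 : ℝ) / p))‖
          ≤ C * ‖z - 1‖ ^ 2 * (∑ p ∈ T, (1 : ℝ) / p ^ 2) *
              Real.exp ((z.re - 1) * ∑ p ∈ T, (1 : ℝ) / p) := by
  refine ⟨5000, by norm_num, ?_⟩
  intro Ω mΩ μ hμ T hTp X hXmeas hXind hXdist z hz
  classical
  set g : ℕ → ℕ → ℂ := fun _ n => if 1 ≤ n then z else 1 with hgdef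
  have hgm : ∀ p, Measurable (g p) := fun p => Measurable.of_discrete
  have hYmeas : ∀ p, Measurable (fun ω => g p (X p ω)) := fun p => (hgm p).comp (hXmeas p)
  have hYbdd : ∀ p ω, ‖g p (X p ω)‖ ≤ 2 := by
    intro p ω
    simp only [hgdef]
    split
    · exact hz
    · simp
  have hYind : iIndepFun (fun p ω => g p (X p ω)) μ :=
    hXind.comp g hgm
  have part1 : (∫ ω, z ^ (T.filter (fun p => 1 ≤ X p ω)).card ∂μ)
      = ∏ p ∈ T, (1 + (z - 1) / (p : ℂ)) := by
    have hrw : ∀ ω, z ^ (T.filter (fun p => 1 ≤ X p ω)).card = ∏ p ∈ T, g p (X p ω) := by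
      intro ω
      rw [Finset.card_filter, ← Finset.prod_pow_eq_pow_sum]
      refine Finset.prod_congr rfl fun p _ => ?_
      by_cases h : 1 ≤ X p ω <;> simp [hgdef, h]
    rw [integral_congr_ae (Filter.Eventually.of_forall hrw),
      integral_finset_prod_complex μ _ hYmeas hYbdd hYind T]
    refine Finset.prod_congr rfl fun p hp => ?_
    exact integral_ite_eq_aux μ (X p) (hXmeas p) p (hTp p hp).two_le
      (by simpa using hXdist p hp 0) z
  refine ⟨part1, ?_⟩
  rw [part1]
  set w := z - 1 with hwdef
  set H : ℝ := ∑ p ∈ T, (1:ℝ)/p with hH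
  set H2 : ℝ := ∑ p ∈ T, (1:ℝ)/(p:ℝ)^2 with hH2
  have hwn : ‖w‖ ≤ 3 := by
    calc ‖w‖ ≤ ‖z‖ + ‖(1:ℂ)‖ := norm_sub_le z 1
      _ ≤ 3 := by rw [norm_one]; linarith
  have hwre : w.re = z.re - 1 := by
    rw [hwdef, Complex.sub_re, Complex.one_re]
  have hwrabs : |w.re| ≤ 3 := le_trans (Complex.abs_re_le_norm w) (by exact hwn)
  have h2p : ∀ p ∈ T, (2:ℝ) ≤ (p:ℝ) := fun p hp => by exact_mod_cast (hTp p hp).two_le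
  have hexp : Complex.exp (w * (H:ℂ)) = ∏ p ∈ T, Complex.exp (w/(p:ℂ)) := by
    rw [← Complex.exp_sum]
    congr 1
    rw [hH]
    push_cast
    rw [Finset.mul_sum]
    exact Finset.sum_congr rfl fun p _ => by ring
  rw [hexp]
  set A : ℕ → ℝ := fun p => Real.exp (w.re/(p:ℝ) + ‖w‖^2/(2*(p:ℝ)^2)) with hA
  have hApos : ∀ p, 0 < A p := fun p => Real.exp_pos _
  have hure : ∀ p : ℕ, (w/(p:ℂ)).re = w.re/(p:ℝ) := by
    intro p
    rw [show ((p:ℕ):ℂ) = (((p:ℕ):ℝ):ℂ) by push_cast; ring, Complex.div_ofReal_re]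
  have hun : ∀ p : ℕ, ‖w/(p:ℂ)‖ = ‖w‖/(p:ℝ) := by
    intro p
    rw [norm_div, RCLike.norm_natCast]
  have hfA : ∀ p ∈ T, ‖1 + w/(p:ℂ)‖ ≤ A p := by
    intro p hp
    refine (norm_one_add_le_exp _).trans ?_
    apply Real.exp_le_exp.2
    rw [hure p, hun p, div_pow]
    have h2 := h2p p hp
    apply le_of_eq
    ring
  have hgA : ∀ p ∈ T, ‖Complex.exp (w/(p:ℂ))‖ ≤ A p := by
    intro p hp
    rw [Complex.norm_exp]
    apply Real.exp_le_exp.2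
    rw [hure p]
    have h2 := h2p p hp
    have : (0:ℝ) ≤ ‖w‖^2/(2*(p:ℝ)^2) := by positivity
    linarith
  have hdiff : ∀ p ∈ T, ‖(1 + w/(p:ℂ)) - Complex.exp (w/(p:ℂ))‖ ≤ 10*‖w‖^2/(p:ℝ)^2 := by
    intro p hp
    have h2 := h2p p hp
    have hppos : (0:ℝ) < p := by linarith
    have hu32 : ‖w/(p:ℂ)‖ ≤ 3/2 := by
      rw [hun p, div_le_iff₀ hppos]
      nlinarith
    have hb := norm_exp_sub_one_sub_le hu32
    have heq : (1 + w/(p:ℂ)) - Complex.exp (w/(p:ℂ))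
        = -(Complex.exp (w/(p:ℂ)) - 1 - w/(p:ℂ)) := by ring
    rw [heq, norm_neg]
    refine hb.trans ?_
    rw [hun p, div_pow, mul_div_assoc]
  have hprodA : ∀ p ∈ T, ∏ q ∈ T.erase p, A q ≤ Real.exp ((z.re - 1)*H + 6) := by
    intro p hp
    have h2 := h2p p hp
    rw [hA, ← Real.exp_sum]
    apply Real.exp_le_exp.2
    rw [Finset.sum_add_distrib]
    have h1 : ∑ q ∈ T.erase p, w.re/(q:ℝ) = w.re * H - w.re/(p:ℝ) := by
      have hea := Finset.sum_erase_add T (fun q => w.re/(q:ℝ)) hp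
      have hsum : ∑ q ∈ T, w.re/(q:ℝ) = w.re * H := by
        rw [hH, Finset.mul_sum]
        exact Finset.sum_congr rfl fun q _ => by ring
      linarith
    have hterm : -(w.re/(p:ℝ)) ≤ 3/2 := by
      have h1 : -w.re ≤ 3 := by cases abs_le.1 hwrabs; linarith
      rw [← neg_div, div_le_iff₀ (by linarith : (0:ℝ) < (p:ℝ))]
      nlinarith
    have hsq : ∑ q ∈ T.erase p, ‖w‖^2/(2*(q:ℝ)^2) ≤ 9/2 := by
      have hsub : ∑ q ∈ T.erase p, ‖w‖^2/(2*(q:ℝ)^2) ≤ ∑ q ∈ T, ‖w‖^2/(2*(q:ℝ)^2) :=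
        Finset.sum_le_sum_of_subset_of_nonneg (Finset.erase_subset p T)
          (fun q _ _ => by positivity)
      have heqs : ∑ q ∈ T, ‖w‖^2/(2*(q:ℝ)^2) = (‖w‖^2/2) * ∑ q ∈ T, (1:ℝ)/(q:ℝ)^2 := by
        rw [Finset.mul_sum]
        exact Finset.sum_congr rfl fun q _ => by ring
      have hle1 := sum_inv_sq_le_one T (fun q hq => (hTp q hq).two_le)
      have hS0 : (0:ℝ) ≤ ∑ q ∈ T, (1:ℝ)/(q:ℝ)^2 :=
        Finset.sum_nonneg fun q _ => by positivity
      nlinarith [norm_nonneg w]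
    rw [h1]
    have hWH : w.re * H = (z.re - 1) * H := by rw [hwre]
    linarith
  have hH2nn : 0 ≤ H2 := Finset.sum_nonneg fun q _ => by positivity
  calc ‖∏ p ∈ T, (1 + w/(p:ℂ)) - ∏ p ∈ T, Complex.exp (w/(p:ℂ))‖
      ≤ ∑ p ∈ T, ‖(1 + w/(p:ℂ)) - Complex.exp (w/(p:ℂ))‖ * ∏ q ∈ T.erase p, A q :=
        prod_sub_prod_norm_le T _ _ A (fun i _ => (hApos i).le) hfA hgA
    _ ≤ ∑ p ∈ T, (10*‖w‖^2/(p:ℝ)^2) * Real.exp ((z.re - 1)*H + 6) := by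
        refine Finset.sum_le_sum fun p hp => ?_
        refine mul_le_mul (hdiff p hp) (hprodA p hp)
          (Finset.prod_nonneg fun q _ => (hApos q).le) ?_
        have h2 := h2p p hp
        positivity
    _ = (10 * Real.exp 6) * ‖w‖^2 * H2 * Real.exp ((z.re - 1)*H) := by
        rw [← Finset.sum_mul, Real.exp_add]
        have : ∑ p ∈ T, 10*‖w‖^2/(p:ℝ)^2 = 10 * ‖w‖^2 * H2 := by
          rw [hH2, Finset.mul_sum]
          exact Finset.sum_congr rfl fun q _ => by ring
        rw [this]
        ring
    _ ≤ 5000 * ‖w‖ ^ 2 * H2 * Real.exp ((z.re - 1) * H) := by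
        have hexp6 : Real.exp 6 ≤ 500 := by
          have h9 := Real.exp_one_lt_d9
          have h6 : Real.exp 6 = Real.exp 1 ^ 6 := by
            rw [← Real.exp_nat_mul]; norm_num
          have hlt : Real.exp 1 ^ 6 ≤ (2.7182818286:ℝ) ^ 6 :=
            pow_le_pow_left₀ (Real.exp_pos 1).le h9.le 6
          rw [h6]
          refine hlt.trans ?_
          norm_num
        have hE : (0:ℝ) < Real.exp ((z.re - 1)*H) := Real.exp_pos _
        nlinarith [sq_nonneg ‖w‖, mul_nonneg (mul_nonneg (sq_nonneg ‖w‖) hH2nn) hE.le,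
          Real.exp_pos (6:ℝ)]
end

section
/- Let λ > 0 and H'' ≥ 0. Then Σ_{1 ≤ k ≤ 1.9λ} H''·e^{−λ}·(λ^k/k!)·(1/(k+1) + ((k−λ)/λ)²) ≤ C·H''/λ for an absolute constant C. -/
open Finset

private lemma sum_Icc_pow_div_factorial_le (lam : ℝ) (hlam : 0 ≤ lam) (m N : ℕ) :
    ∑ k ∈ Icc m N, lam ^ k / (k.factorial : ℝ) ≤ Real.exp lam := by
  calc ∑ k ∈ Icc m N, lam ^ k / (k.factorial : ℝ)
      ≤ ∑ k ∈ range (N+1), lam ^ k / (k.factorial : ℝ) := by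
        apply sum_le_sum_of_subset_of_nonneg
        · intro k hk; simp only [mem_Icc] at hk; simp only [mem_range]; omega
        · intros; positivity
    _ ≤ _ := Real.sum_le_exp_of_nonneg hlam _

private lemma sum_Icc_one_eq (N : ℕ) (g : ℕ → ℝ) :
    ∑ k ∈ Icc 1 N, g k = ∑ i ∈ range N, g (i+1) := by
  rw [← Finset.Ico_add_one_right_eq_Icc, Finset.sum_Ico_eq_sum_range]
  simp [Nat.add_comm]

private lemma sum_Icc_two_eq (N : ℕ) (g : ℕ → ℝ) :
    ∑ k ∈ Icc 2 (N+1), g k = ∑ i ∈ range N, g (i+2) := by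
  rw [← Finset.Ico_add_one_right_eq_Icc, Finset.sum_Ico_eq_sum_range,
      show N+1+1-2 = N from by omega]
  simp [Nat.add_comm]

private lemma telescope_sum (lam : ℝ) (N : ℕ) :
    ∑ k ∈ Icc 1 N, ((k:ℝ) - lam)^2 * lam^k / k.factorial
      = lam * ∑ k ∈ Icc 1 N, lam^k / (k.factorial : ℝ)
        + ((1 - lam) * lam
           - (((N:ℝ)+1 - lam) * lam^(N+1) / N.factorial)) := by
  set c : ℕ → ℝ := fun i => ((i:ℝ)+1 - lam) * lam^(i+1) / i.factorial with hc
  have key : ∀ i : ℕ,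
      (((i+1 : ℕ):ℝ) - lam)^2 * lam^(i+1) / (i+1).factorial
        = lam * (lam^(i+1) / ((i+1).factorial : ℝ)) + (c i - c (i+1)) := by
    intro i
    have h : (((i+1).factorial : ℝ)) = ((i:ℝ)+1) * i.factorial := by
      rw [Nat.factorial_succ]; push_cast; ring
    have h0 : (i.factorial : ℝ) ≠ 0 := Nat.cast_ne_zero.mpr i.factorial_ne_zero
    simp only [hc]
    push_cast
    rw [h]
    field_simp
    ring
  rw [sum_Icc_one_eq N (fun k => ((k:ℝ) - lam)^2 * lam^k / k.factorial),
      sum_Icc_one_eq N (fun k => lam^k / (k.factorial : ℝ))]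
  simp only [key]
  rw [Finset.sum_add_distrib, Finset.sum_range_sub' c N, ← Finset.mul_sum]
  simp only [hc]
  push_cast
  norm_num

private lemma S2_bound (lam : ℝ) (hlam : 0 < lam) (N : ℕ) (hN : lam ≤ (N:ℝ) + 1) :
    ∑ k ∈ Icc 1 N, lam^k / (k.factorial : ℝ) * (((k:ℝ) - lam) / lam)^2
      ≤ 2 * Real.exp lam / lam := by
  have h1 : ∑ k ∈ Icc 1 N, lam^k / (k.factorial : ℝ) * (((k:ℝ) - lam) / lam)^2
      = (∑ k ∈ Icc 1 N, ((k:ℝ) - lam)^2 * lam^k / k.factorial) / lam^2 := by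
    rw [Finset.sum_div]
    refine Finset.sum_congr rfl fun k _ => ?_
    field_simp
  rw [h1, telescope_sum lam N]
  have hE : (1:ℝ) ≤ Real.exp lam := by
    rw [Real.one_le_exp_iff]  -- maybe wrong name
    exact hlam.le
  have hexp := sum_Icc_pow_div_factorial_le lam hlam.le 1 N
  have hnn : 0 ≤ (((N:ℝ)+1 - lam) * lam^(N+1) / N.factorial) := by
    apply div_nonneg _ (by positivity)
    apply mul_nonneg (by linarith) (by positivity)
  have hle : lam * ∑ k ∈ Icc 1 N, lam^k / (k.factorial : ℝ)
        + ((1 - lam) * lam - (((N:ℝ)+1 - lam) * lam^(N+1) / N.factorial))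
      ≤ 2 * (lam * Real.exp lam) := by
    have h2 : (1 - lam) * lam ≤ lam * Real.exp lam := by nlinarith
    nlinarith [mul_le_mul_of_nonneg_left hexp hlam.le]
  rw [div_le_div_iff₀ (by positivity) hlam]
  calc (lam * ∑ k ∈ Icc 1 N, lam^k / (k.factorial : ℝ)
        + ((1 - lam) * lam - (((N:ℝ)+1 - lam) * lam^(N+1) / N.factorial))) * lam
      ≤ 2 * (lam * Real.exp lam) * lam := by
        apply mul_le_mul_of_nonneg_right hle hlam.le
    _ = 2 * Real.exp lam * lam^2 := by ring

private lemma S1_bound (lam : ℝ) (hlam : 0 < lam) (N : ℕ) :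
    ∑ k ∈ Icc 1 N, lam^k / (k.factorial : ℝ) * (1 / ((k:ℝ)+1))
      ≤ Real.exp lam / lam := by
  rw [le_div_iff₀ hlam]
  have h : (∑ k ∈ Icc 1 N, lam^k / (k.factorial:ℝ) * (1/((k:ℝ)+1))) * lam
      = ∑ k ∈ Icc 2 (N+1), lam^k / (k.factorial:ℝ) := by
    rw [Finset.sum_mul, sum_Icc_one_eq N (fun k => lam^k/(k.factorial:ℝ)*(1/((k:ℝ)+1))*lam),
        sum_Icc_two_eq N (fun k => lam^k/(k.factorial:ℝ))]
    refine Finset.sum_congr rfl fun i _ => ?_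
    have h1 : ((i+2).factorial : ℝ) = ((i:ℝ)+2) * (i+1).factorial := by
      rw [show i+2 = (i+1)+1 from rfl, Nat.factorial_succ]; push_cast; ring
    have h0 : ((i+1).factorial : ℝ) ≠ 0 := Nat.cast_ne_zero.mpr (i+1).factorial_ne_zero
    push_cast
    rw [h1]
    field_simp
    ring
  rw [h]
  exact sum_Icc_pow_div_factorial_le lam hlam.le 2 (N+1)

/-- Key summation bound: there is an absolute constant `C` such that for all `λ > 0` and
`H'' ≥ 0`, `Σ_{1 ≤ k ≤ 1.9λ} H'' e^{−λ} (λ^k/k!) (1/(k+1) + ((k−λ)/λ)²) ≤ C H''/λ`. -/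
theorem poisson_local_error_sum : ∃ C : ℝ, 0 < C ∧
    ∀ lam H2 : ℝ, 0 < lam → 0 ≤ H2 →
      (∑ k ∈ Finset.Icc 1 ⌊1.9 * lam⌋₊,
          H2 * Real.exp (-lam) * (lam ^ k / k.factorial) *
            (1 / ((k : ℝ) + 1) + (((k : ℝ) - lam) / lam) ^ 2))
        ≤ C * H2 / lam := by
  refine ⟨3, by norm_num, fun lam H2 hlam hH2 => ?_⟩
  set N := ⌊1.9 * lam⌋₊ with hN
  have hNl : lam ≤ (N:ℝ) + 1 := by
    have h := Nat.lt_floor_add_one (1.9 * lam)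
    rw [hN]
    push_cast at h ⊢
    linarith
  have step1 : (∑ k ∈ Finset.Icc 1 N,
          H2 * Real.exp (-lam) * (lam ^ k / k.factorial) *
            (1 / ((k : ℝ) + 1) + (((k : ℝ) - lam) / lam) ^ 2))
      = H2 * Real.exp (-lam) *
        ((∑ k ∈ Icc 1 N, lam^k / (k.factorial:ℝ) * (1/((k:ℝ)+1)))
          + ∑ k ∈ Icc 1 N, lam^k / (k.factorial:ℝ) * (((k:ℝ) - lam)/lam)^2) := by
    rw [← Finset.sum_add_distrib, Finset.mul_sum]
    exact Finset.sum_congr rfl fun k _ => by ring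
  rw [step1]
  have hb : (∑ k ∈ Icc 1 N, lam^k / (k.factorial:ℝ) * (1/((k:ℝ)+1)))
          + (∑ k ∈ Icc 1 N, lam^k / (k.factorial:ℝ) * (((k:ℝ) - lam)/lam)^2)
      ≤ 3 * Real.exp lam / lam := by
    have := S1_bound lam hlam N
    have := S2_bound lam hlam N hNl
    have : Real.exp lam / lam + 2 * Real.exp lam / lam = 3 * Real.exp lam / lam := by ring
    linarith [S1_bound lam hlam N, S2_bound lam hlam N hNl]
  calc H2 * Real.exp (-lam) *
        ((∑ k ∈ Icc 1 N, lam^k / (k.factorial:ℝ) * (1/((k:ℝ)+1)))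
          + ∑ k ∈ Icc 1 N, lam^k / (k.factorial:ℝ) * (((k:ℝ) - lam)/lam)^2)
      ≤ H2 * Real.exp (-lam) * (3 * Real.exp lam / lam) := by
        apply mul_le_mul_of_nonneg_left hb (by positivity)
    _ = 3 * H2 / lam := by
        rw [Real.exp_neg]
        have hE : Real.exp lam ≠ 0 := (Real.exp_pos lam).ne'
        field_simp
end
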